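/- Let G = ⟨a, b | b^{-1}a²b = a^{-2}, a^{-1}b²a = b^{-2}⟩ and let σ: G → G be the homomorphism with σ(a) = z^{w-t}a and σ(b) = z^w b, where z = (ab)². If t ≠ 0 or equivalently 1 - 2t ≠ 1, σ maps z to z^{1-2t} and fixes a² and b²; since 1 - 2t ≠ 0 for all integers t, σ is injective on the free abelian subgroup H = ⟨a², b², z⟩ and hence injective on G. -/

import Mathlib

noncomputable section

/-- The relators `b⁻¹a²ba²` and `a⁻¹b²ab²` of the Promislow group. -/
def promislowRels : Set (FreeGroup (Fin 2)) :=
  {(FreeGroup.of 1)⁻¹ * (FreeGroup.of 0) ^ 2 * FreeGroup.of 1 * (FreeGroup.of 0) ^ 2,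
   (FreeGroup.of 0)⁻¹ * (FreeGroup.of 1) ^ 2 * FreeGroup.of 0 * (FreeGroup.of 1) ^ 2}

/-- The Promislow group `G = ⟨a, b | b⁻¹a²b = a⁻², a⁻¹b²a = b⁻²⟩`. -/
abbrev PromislowGroup := PresentedGroup promislowRels

/-- The generator `a` of the Promislow group. -/
def pa : PromislowGroup := PresentedGroup.of 0

/-- The generator `b` of the Promislow group. -/
def pb : PromislowGroup := PresentedGroup.of 1

/-- The element `z = (ab)²` of the Promislow group. -/
def pz : PromislowGroup := (pa * pb) ^ 2


/-! ### The concrete crystallographic group `ℤ³ ⋊ {±1}³` -/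

@[ext] structure KK where
  v : Fin 3 → ℤ
  s : Fin 3 → ℤˣ

namespace KK

instance : Group KK where
  mul x y := ⟨fun i => x.v i + (x.s i : ℤ) * y.v i, fun i => x.s i * y.s i⟩
  one := ⟨fun _ => 0, fun _ => 1⟩
  inv x := ⟨fun i => -((((x.s i)⁻¹ : ℤˣ) : ℤ) * x.v i), fun i => (x.s i)⁻¹⟩
  mul_assoc a b c := by
    ext i
    · show (a.v i + a.s i * b.v i) + ((a.s i * b.s i : ℤˣ) : ℤ) * c.v i
        = a.v i + (a.s i : ℤ) * (b.v i + (b.s i : ℤ) * c.v i)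
      push_cast
      ring
    · exact congrArg Units.val (mul_assoc (a.s i) (b.s i) (c.s i))
  one_mul a := by
    ext i
    · show (0 : ℤ) + ((1 : ℤˣ) : ℤ) * a.v i = a.v i
      simp
    · exact congrArg Units.val (one_mul (a.s i))
  mul_one a := by
    ext i
    · show a.v i + (a.s i : ℤ) * 0 = a.v i
      simp
    · exact congrArg Units.val (mul_one (a.s i))
  inv_mul_cancel a := by
    ext i
    · show -((((a.s i)⁻¹ : ℤˣ) : ℤ) * a.v i) + (((a.s i)⁻¹ : ℤˣ) : ℤ) * a.v i = 0
      ring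
    · exact congrArg Units.val (inv_mul_cancel (a.s i))

@[simp] lemma mul_v (x y : KK) (i : Fin 3) : (x * y).v i = x.v i + (x.s i : ℤ) * y.v i := rfl
@[simp] lemma mul_s (x y : KK) (i : Fin 3) : (x * y).s i = x.s i * y.s i := rfl
@[simp] lemma one_v (i : Fin 3) : (1 : KK).v i = 0 := rfl
@[simp] lemma one_s (i : Fin 3) : (1 : KK).s i = 1 := rfl
@[simp] lemma inv_v (x : KK) (i : Fin 3) :
    (x⁻¹).v i = -((((x.s i)⁻¹ : ℤˣ) : ℤ) * x.v i) := rfl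
@[simp] lemma inv_s (x : KK) (i : Fin 3) : (x⁻¹).s i = (x.s i)⁻¹ := rfl

lemma tr_mul (v w : Fin 3 → ℤ) : (⟨v, 1⟩ : KK) * ⟨w, 1⟩ = ⟨v + w, 1⟩ := by
  ext i
  · simp
  · simp

lemma tr_zpow (v : Fin 3 → ℤ) (n : ℤ) : (⟨v, 1⟩ : KK) ^ n = ⟨n • v, 1⟩ := by
  have hnat : ∀ m : ℕ, (⟨v, 1⟩ : KK) ^ m = ⟨(m : ℤ) • v, 1⟩ := by
    intro m
    induction m with
    | zero => ext i <;> simp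
    | succ m ih =>
      rw [pow_succ, ih, tr_mul]
      ext i
      · simp only [Pi.add_apply, Pi.smul_apply, smul_eq_mul]
        push_cast
        ring
      · rfl
  rcases n with m | m
  · simpa using hnat m
  · rw [zpow_negSucc, hnat]
    ext i
    · simp only [Pi.smul_apply, Pi.one_apply, smul_eq_mul, KK.inv_v, KK.inv_s, inv_one,
        Units.val_one, Int.negSucc_eq]
      push_cast
      ring
    · exact congrArg Units.val (by simp)

end KK

namespace Promislow

/-! ### Consequences of the relations -/

lemma relator_one {r : FreeGroup (Fin 2)} (h : r ∈ promislowRels) :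
    PresentedGroup.mk promislowRels r = 1 :=
  (QuotientGroup.eq_one_iff _).mpr (Subgroup.subset_normalClosure h)

lemma rel1 : pb⁻¹ * (pa * pa) * pb * (pa * pa) = 1 := by
  have h := relator_one (r :=
    (FreeGroup.of 1)⁻¹ * (FreeGroup.of 0) ^ 2 * FreeGroup.of 1 * (FreeGroup.of 0) ^ 2)
    (Set.mem_insert _ _)
  simp only [map_mul, map_pow, map_inv] at h
  calc pb⁻¹ * (pa * pa) * pb * (pa * pa)
      = pb⁻¹ * pa ^ 2 * pb * pa ^ 2 := by rw [pow_two]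
  _ = 1 := h

lemma rel2 : pa⁻¹ * (pb * pb) * pa * (pb * pb) = 1 := by
  have h := relator_one (r :=
    (FreeGroup.of 0)⁻¹ * (FreeGroup.of 1) ^ 2 * FreeGroup.of 0 * (FreeGroup.of 1) ^ 2)
    (Set.mem_insert_of_mem _ rfl)
  simp only [map_mul, map_pow, map_inv] at h
  calc pa⁻¹ * (pb * pb) * pa * (pb * pb)
      = pa⁻¹ * pb ^ 2 * pa * pb ^ 2 := by rw [pow_two]
  _ = 1 := h

lemma c1 : pb⁻¹ * (pa * pa) * pb = (pa * pa)⁻¹ := by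
  calc pb⁻¹ * (pa * pa) * pb
      = (pb⁻¹ * (pa * pa) * pb * (pa * pa)) * (pa * pa)⁻¹ := by group
  _ = (pa * pa)⁻¹ := by rw [rel1]; group

lemma c2 : pa⁻¹ * (pb * pb) * pa = (pb * pb)⁻¹ := by
  calc pa⁻¹ * (pb * pb) * pa
      = (pa⁻¹ * (pb * pb) * pa * (pb * pb)) * (pb * pb)⁻¹ := by group
  _ = (pb * pb)⁻¹ := by rw [rel2]; group

lemma c1' : pb⁻¹ * (pa * pa)⁻¹ * pb = pa * pa := by
  calc pb⁻¹ * (pa * pa)⁻¹ * pb = (pb⁻¹ * (pa * pa) * pb)⁻¹ := by group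
  _ = pa * pa := by rw [c1, inv_inv]

lemma c2' : pa⁻¹ * (pb * pb)⁻¹ * pa = pb * pb := by
  calc pa⁻¹ * (pb * pb)⁻¹ * pa = (pa⁻¹ * (pb * pb) * pa)⁻¹ := by group
  _ = pb * pb := by rw [c2, inv_inv]

lemma d1 : pb * (pa * pa) * pb⁻¹ = (pa * pa)⁻¹ := by
  conv_lhs => rw [← c1']
  group

lemma d1' : pb * (pa * pa)⁻¹ * pb⁻¹ = pa * pa := by
  conv_lhs => rw [← c1]
  group

lemma d2 : pa * (pb * pb) * pa⁻¹ = (pb * pb)⁻¹ := by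
  conv_lhs => rw [← c2']
  group

lemma d2' : pa * (pb * pb)⁻¹ * pa⁻¹ = pb * pb := by
  conv_lhs => rw [← c2]
  group

lemma m1e : pb * pb * pa = pa * (pb * pb)⁻¹ := by
  calc pb * pb * pa = pa * (pa⁻¹ * (pb * pb) * pa) := by group
  _ = pa * (pb * pb)⁻¹ := by rw [c2]

lemma m2e : (pb * pb)⁻¹ * pa = pa * (pb * pb) := by
  calc (pb * pb)⁻¹ * pa = pa * (pa⁻¹ * (pb * pb)⁻¹ * pa) := by group
  _ = pa * (pb * pb) := by rw [c2']

lemma m4e : (pa * pa)⁻¹ * pb = pb * (pa * pa) := by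
  calc (pa * pa)⁻¹ * pb = pb * (pb⁻¹ * (pa * pa)⁻¹ * pb) := by group
  _ = pb * (pa * pa) := by rw [c1']

lemma m8e : (pa * pa)⁻¹ * pb⁻¹ = pb⁻¹ * (pa * pa) := by
  calc (pa * pa)⁻¹ * pb⁻¹ = pb⁻¹ * (pb * (pa * pa)⁻¹ * pb⁻¹) := by group
  _ = pb⁻¹ * (pa * pa) := by rw [d1']

lemma m7se : pb⁻¹ * (pa * pa)⁻¹ = pa * pa * pb⁻¹ := by
  conv_lhs => rw [← d1]
  group

lemma m9e : pa * (pb * pb)⁻¹ = pb * pb * pa := m1e.symm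

lemma mAbe : pb * (pa * pa) = (pa * pa)⁻¹ * pb := by
  calc pb * (pa * pa) = (pb * (pa * pa) * pb⁻¹) * pb := by group
  _ = (pa * pa)⁻¹ * pb := by rw [d1]

lemma zconj_a : pa * pz * pa⁻¹ = pz⁻¹ := by
  have key : pa * pz * pa⁻¹ * pz = 1 := by
    calc pa * pz * pa⁻¹ * pz
        = pa * pa * pb * pa * (pb * pb * pa) * pb := by rw [pz, pow_two]; group
    _ = pa * pa * pb * pa * (pa * (pb * pb)⁻¹) * pb := by rw [m1e]
    _ = pa * pa * (pb * (pa * pa)) * pb⁻¹ := by group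
    _ = pa * pa * ((pa * pa)⁻¹ * pb) * pb⁻¹ := by rw [mAbe]
    _ = 1 := by group
  calc pa * pz * pa⁻¹ = (pa * pz * pa⁻¹ * pz) * pz⁻¹ := by group
  _ = pz⁻¹ := by rw [key]; group

lemma zconj_b : pb * pz * pb⁻¹ = pz⁻¹ := by
  have key : pb * pa * (pb * pa) * pz = 1 := by
    calc pb * pa * (pb * pa) * pz
        = pb * pa * (pb * (pa * pa)) * pb * pa * pb := by rw [pz, pow_two]; group
    _ = pb * pa * ((pa * pa)⁻¹ * pb) * pb * pa * pb := by rw [mAbe]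
    _ = pb * pa⁻¹ * (pb * pb * pa) * pb := by group
    _ = pb * pa⁻¹ * (pa * (pb * pb)⁻¹) * pb := by rw [m1e]
    _ = 1 := by group
  calc pb * pz * pb⁻¹ = pb * pa * (pb * pa) := by rw [pz, pow_two]; group
  _ = (pb * pa * (pb * pa) * pz) * pz⁻¹ := by group
  _ = pz⁻¹ := by rw [key]; group

/-! ### Semiconjugation set-up -/

lemma semi_of_conj {x y : PromislowGroup} (h : x * y * x⁻¹ = y⁻¹) :
    SemiconjBy x y y⁻¹ := by
  show x * y = y⁻¹ * x
  calc x * y = (x * y * x⁻¹) * x := by group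
  _ = y⁻¹ * x := by rw [h]

lemma semi_inv {x y : PromislowGroup} (h : SemiconjBy x y y⁻¹) :
    SemiconjBy x⁻¹ y y⁻¹ := by
  have h2 := (h.inv_symm_left).inv_right
  rwa [inv_inv] at h2

lemma scZa : SemiconjBy pa pz pz⁻¹ := semi_of_conj zconj_a
lemma scZb : SemiconjBy pb pz pz⁻¹ := semi_of_conj zconj_b
lemma scBa : SemiconjBy pa (pb ^ 2) (pb ^ 2)⁻¹ := semi_of_conj (by rw [pow_two]; exact d2)
lemma scAb : SemiconjBy pb (pa ^ 2) (pa ^ 2)⁻¹ := semi_of_conj (by rw [pow_two]; exact d1)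

lemma move_inv {x y : PromislowGroup} (h : SemiconjBy x y y⁻¹) (n : ℤ) :
    x * y ^ n = y ^ (-n) * x := by
  have h2 := (h.zpow_right n).eq
  rwa [inv_zpow, ← zpow_neg] at h2

lemma move_comm {x y : PromislowGroup} (h : Commute x y) (n : ℤ) :
    x * y ^ n = y ^ n * x :=
  (h.zpow_right n).eq

lemma comAa : Commute pa (pa ^ 2) := (Commute.refl pa).pow_right 2
lemma comBb : Commute pb (pb ^ 2) := (Commute.refl pb).pow_right 2

lemma comZA : Commute pz (pa ^ 2) := by
  have h1 := scZa.eq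
  have h2 := scZa.inv_right.eq
  rw [inv_inv] at h2
  show pz * pa ^ 2 = pa ^ 2 * pz
  rw [pow_two]
  calc pz * (pa * pa) = (pz * pa) * pa := by group
  _ = (pa * pz⁻¹) * pa := by rw [← h2]
  _ = pa * (pz⁻¹ * pa) := by group
  _ = pa * (pa * pz) := by rw [← h1]
  _ = pa * pa * pz := by group

lemma comZB : Commute pz (pb ^ 2) := by
  have h1 := scZb.eq
  have h2 := scZb.inv_right.eq
  rw [inv_inv] at h2
  show pz * pb ^ 2 = pb ^ 2 * pz
  rw [pow_two]
  calc pz * (pb * pb) = (pz * pb) * pb := by group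
  _ = (pb * pz⁻¹) * pb := by rw [← h2]
  _ = pb * (pz⁻¹ * pb) := by group
  _ = pb * (pb * pz) := by rw [← h1]
  _ = pb * pb * pz := by group

lemma comAB : Commute (pa ^ 2) (pb ^ 2) := by
  have h1 := scBa.eq
  have h2 := scBa.inv_right.eq
  rw [inv_inv] at h2
  show pa ^ 2 * pb ^ 2 = pb ^ 2 * pa ^ 2
  rw [pow_two pa]
  calc pa * pa * pb ^ 2 = pa * (pa * pb ^ 2) := by group
  _ = pa * ((pb ^ 2)⁻¹ * pa) := by rw [h1]
  _ = (pa * (pb ^ 2)⁻¹) * pa := by group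
  _ = (pb ^ 2 * pa) * pa := by rw [h2]
  _ = pb ^ 2 * (pa * pa) := by group

/-! ### The abelian subgroup `H` and normal forms -/

def hfe (i j k : ℤ) : PromislowGroup := pz ^ i * (pa ^ 2) ^ j * (pb ^ 2) ^ k

lemma hfe_mul (i j k i' j' k' : ℤ) :
    hfe i j k * hfe i' j' k' = hfe (i + i') (j + j') (k + k') := by
  have h1 : Commute (pz ^ i') ((pa ^ 2) ^ j) := comZA.zpow_zpow i' j
  have h2 : Commute (pz ^ i') ((pb ^ 2) ^ k) := comZB.zpow_zpow i' k
  have h3 : Commute ((pa ^ 2) ^ j') ((pb ^ 2) ^ k) := comAB.zpow_zpow j' k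
  simp only [hfe]
  calc pz ^ i * (pa ^ 2) ^ j * (pb ^ 2) ^ k * (pz ^ i' * (pa ^ 2) ^ j' * (pb ^ 2) ^ k')
      = pz ^ i * ((pa ^ 2) ^ j * ((pb ^ 2) ^ k * pz ^ i') * (pa ^ 2) ^ j') * (pb ^ 2) ^ k' := by
        group
  _ = pz ^ i * ((pa ^ 2) ^ j * (pz ^ i' * (pb ^ 2) ^ k) * (pa ^ 2) ^ j') * (pb ^ 2) ^ k' := by
        rw [h2.symm.eq]
  _ = pz ^ i * (((pa ^ 2) ^ j * pz ^ i') * ((pb ^ 2) ^ k * (pa ^ 2) ^ j')) * (pb ^ 2) ^ k' := by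
        group
  _ = pz ^ i * ((pz ^ i' * (pa ^ 2) ^ j) * ((pa ^ 2) ^ j' * (pb ^ 2) ^ k)) * (pb ^ 2) ^ k' := by
        rw [h1.symm.eq, h3.symm.eq]
  _ = (pz ^ i * pz ^ i') * ((pa ^ 2) ^ j * (pa ^ 2) ^ j') * ((pb ^ 2) ^ k * (pb ^ 2) ^ k') := by
        group
  _ = pz ^ (i + i') * (pa ^ 2) ^ (j + j') * (pb ^ 2) ^ (k + k') := by
        rw [← zpow_add, ← zpow_add, ← zpow_add]

lemma a_hfe (i j k : ℤ) : pa * hfe i j k = hfe (-i) j (-k) * pa := by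
  simp only [hfe]
  calc pa * (pz ^ i * (pa ^ 2) ^ j * (pb ^ 2) ^ k)
      = (pa * pz ^ i) * ((pa ^ 2) ^ j * (pb ^ 2) ^ k) := by group
  _ = (pz ^ (-i) * pa) * ((pa ^ 2) ^ j * (pb ^ 2) ^ k) := by rw [move_inv scZa]
  _ = pz ^ (-i) * ((pa * (pa ^ 2) ^ j) * (pb ^ 2) ^ k) := by group
  _ = pz ^ (-i) * (((pa ^ 2) ^ j * pa) * (pb ^ 2) ^ k) := by rw [move_comm comAa]
  _ = pz ^ (-i) * ((pa ^ 2) ^ j * (pa * (pb ^ 2) ^ k)) := by group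
  _ = pz ^ (-i) * ((pa ^ 2) ^ j * ((pb ^ 2) ^ (-k) * pa)) := by rw [move_inv scBa]
  _ = pz ^ (-i) * (pa ^ 2) ^ j * (pb ^ 2) ^ (-k) * pa := by group

lemma ai_hfe (i j k : ℤ) : pa⁻¹ * hfe i j k = hfe (-i) j (-k) * pa⁻¹ := by
  simp only [hfe]
  calc pa⁻¹ * (pz ^ i * (pa ^ 2) ^ j * (pb ^ 2) ^ k)
      = (pa⁻¹ * pz ^ i) * ((pa ^ 2) ^ j * (pb ^ 2) ^ k) := by group
  _ = (pz ^ (-i) * pa⁻¹) * ((pa ^ 2) ^ j * (pb ^ 2) ^ k) := by rw [move_inv (semi_inv scZa)]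
  _ = pz ^ (-i) * ((pa⁻¹ * (pa ^ 2) ^ j) * (pb ^ 2) ^ k) := by group
  _ = pz ^ (-i) * (((pa ^ 2) ^ j * pa⁻¹) * (pb ^ 2) ^ k) := by rw [move_comm comAa.inv_left]
  _ = pz ^ (-i) * ((pa ^ 2) ^ j * (pa⁻¹ * (pb ^ 2) ^ k)) := by group
  _ = pz ^ (-i) * ((pa ^ 2) ^ j * ((pb ^ 2) ^ (-k) * pa⁻¹)) := by rw [move_inv (semi_inv scBa)]
  _ = pz ^ (-i) * (pa ^ 2) ^ j * (pb ^ 2) ^ (-k) * pa⁻¹ := by group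

lemma b_hfe (i j k : ℤ) : pb * hfe i j k = hfe (-i) (-j) k * pb := by
  simp only [hfe]
  calc pb * (pz ^ i * (pa ^ 2) ^ j * (pb ^ 2) ^ k)
      = (pb * pz ^ i) * ((pa ^ 2) ^ j * (pb ^ 2) ^ k) := by group
  _ = (pz ^ (-i) * pb) * ((pa ^ 2) ^ j * (pb ^ 2) ^ k) := by rw [move_inv scZb]
  _ = pz ^ (-i) * ((pb * (pa ^ 2) ^ j) * (pb ^ 2) ^ k) := by group
  _ = pz ^ (-i) * (((pa ^ 2) ^ (-j) * pb) * (pb ^ 2) ^ k) := by rw [move_inv scAb]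
  _ = pz ^ (-i) * ((pa ^ 2) ^ (-j) * (pb * (pb ^ 2) ^ k)) := by group
  _ = pz ^ (-i) * ((pa ^ 2) ^ (-j) * ((pb ^ 2) ^ k * pb)) := by rw [move_comm comBb]
  _ = pz ^ (-i) * (pa ^ 2) ^ (-j) * (pb ^ 2) ^ k * pb := by group

lemma bi_hfe (i j k : ℤ) : pb⁻¹ * hfe i j k = hfe (-i) (-j) k * pb⁻¹ := by
  simp only [hfe]
  calc pb⁻¹ * (pz ^ i * (pa ^ 2) ^ j * (pb ^ 2) ^ k)
      = (pb⁻¹ * pz ^ i) * ((pa ^ 2) ^ j * (pb ^ 2) ^ k) := by group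
  _ = (pz ^ (-i) * pb⁻¹) * ((pa ^ 2) ^ j * (pb ^ 2) ^ k) := by rw [move_inv (semi_inv scZb)]
  _ = pz ^ (-i) * ((pb⁻¹ * (pa ^ 2) ^ j) * (pb ^ 2) ^ k) := by group
  _ = pz ^ (-i) * (((pa ^ 2) ^ (-j) * pb⁻¹) * (pb ^ 2) ^ k) := by rw [move_inv (semi_inv scAb)]
  _ = pz ^ (-i) * ((pa ^ 2) ^ (-j) * (pb⁻¹ * (pb ^ 2) ^ k)) := by group
  _ = pz ^ (-i) * ((pa ^ 2) ^ (-j) * ((pb ^ 2) ^ k * pb⁻¹)) := by rw [move_comm comBb.inv_left]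
  _ = pz ^ (-i) * (pa ^ 2) ^ (-j) * (pb ^ 2) ^ k * pb⁻¹ := by group

/-! ### Normal form -/

def stf : Fin 4 → PromislowGroup
  | 0 => 1
  | 1 => pa
  | 2 => pb
  | 3 => pa * pb

def IsNF (g : PromislowGroup) : Prop :=
  ∃ (i j k : ℤ) (s : Fin 4), g = hfe i j k * stf s

/-! Multiplication tables `x * stf s = hfe _ _ _ * stf s'`. -/

lemma unf (i : ℤ) : pz ^ i = ((pa * pb) * (pa * pb)) ^ i := by rw [pz, pow_two]

lemma ta0 : pa * stf 0 = hfe 0 0 0 * stf 1 := by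
  simp only [stf, hfe, zpow_zero, one_mul, mul_one]
lemma ta1 : pa * stf 1 = hfe 0 1 0 * stf 0 := by
  simp only [stf, hfe, zpow_zero, zpow_one, one_mul, mul_one, pow_two]
lemma ta2 : pa * stf 2 = hfe 0 0 0 * stf 3 := by
  simp only [stf, hfe, zpow_zero, one_mul, mul_one]
lemma ta3 : pa * stf 3 = hfe 0 1 0 * stf 2 := by
  simp only [stf, hfe, zpow_zero, zpow_one, one_mul, mul_one, pow_two]
  group

lemma tia0 : pa⁻¹ * stf 0 = hfe 0 (-1) 0 * stf 1 := by
  simp only [stf, hfe, zpow_zero, zpow_neg, zpow_one, one_mul, mul_one, pow_two]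
  group
lemma tia1 : pa⁻¹ * stf 1 = hfe 0 0 0 * stf 0 := by
  simp only [stf, hfe, zpow_zero, one_mul, mul_one]
  group
lemma tia2 : pa⁻¹ * stf 2 = hfe 0 (-1) 0 * stf 3 := by
  simp only [stf, hfe, zpow_zero, zpow_neg, zpow_one, one_mul, mul_one, pow_two]
  group
lemma tia3 : pa⁻¹ * stf 3 = hfe 0 0 0 * stf 2 := by
  simp only [stf, hfe, zpow_zero, one_mul, mul_one]
  group

lemma tb0 : pb * stf 0 = hfe 0 0 0 * stf 2 := by
  simp only [stf, hfe, zpow_zero, one_mul, mul_one]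
lemma tb1 : pb * stf 1 = hfe (-1) (-1) 1 * stf 3 := by
  show pb * pa = hfe (-1) (-1) 1 * (pa * pb)
  symm
  simp only [hfe, zpow_neg, zpow_one, unf, pow_two]
  calc ((pa * pb) * (pa * pb))⁻¹ * (pa * pa)⁻¹ * (pb * pb) * (pa * pb)
      = pb⁻¹ * pa⁻¹ * pb⁻¹ * (pa⁻¹ * pa⁻¹ * pa⁻¹) * (pb * pb * pa) * pb := by group
  _ = pb⁻¹ * pa⁻¹ * pb⁻¹ * (pa⁻¹ * pa⁻¹ * pa⁻¹) * (pa * (pb * pb)⁻¹) * pb := by rw [m1e]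
  _ = pb⁻¹ * pa⁻¹ * pb⁻¹ * ((pa * pa)⁻¹ * pb⁻¹) := by group
  _ = pb⁻¹ * pa⁻¹ * pb⁻¹ * (pb⁻¹ * (pa * pa)) := by rw [m8e]
  _ = pb⁻¹ * pa⁻¹ * ((pb * pb)⁻¹ * pa) * pa := by group
  _ = pb⁻¹ * pa⁻¹ * (pa * (pb * pb)) * pa := by rw [m2e]
  _ = pb * pa := by group
lemma tb2 : pb * stf 2 = hfe 0 0 1 * stf 0 := by
  simp only [stf, hfe, zpow_zero, zpow_one, one_mul, mul_one, pow_two]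
lemma tb3 : pb * stf 3 = hfe (-1) (-1) 0 * stf 1 := by
  show pb * (pa * pb) = hfe (-1) (-1) 0 * pa
  symm
  simp only [hfe, zpow_neg, zpow_one, zpow_zero, mul_one, unf, pow_two]
  calc ((pa * pb) * (pa * pb))⁻¹ * (pa * pa)⁻¹ * pa
      = pb⁻¹ * pa⁻¹ * (pb⁻¹ * (pa * pa)⁻¹) := by group
  _ = pb⁻¹ * pa⁻¹ * (pa * pa * pb⁻¹) := by rw [m7se]
  _ = pb⁻¹ * (pa * (pb * pb)⁻¹) * pb := by group
  _ = pb⁻¹ * (pb * pb * pa) * pb := by rw [m9e]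
  _ = pb * (pa * pb) := by group

lemma tib0 : pb⁻¹ * stf 0 = hfe 0 0 (-1) * stf 2 := by
  simp only [stf, hfe, zpow_zero, zpow_neg, zpow_one, one_mul, mul_one, pow_two]
  group
lemma tib1 : pb⁻¹ * stf 1 = hfe (-1) (-1) 0 * stf 3 := by
  show pb⁻¹ * pa = hfe (-1) (-1) 0 * (pa * pb)
  symm
  simp only [hfe, zpow_neg, zpow_one, zpow_zero, mul_one, unf, pow_two]
  calc ((pa * pb) * (pa * pb))⁻¹ * (pa * pa)⁻¹ * (pa * pb)
      = pb⁻¹ * pa⁻¹ * pb⁻¹ * ((pa * pa)⁻¹ * pb) := by group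
  _ = pb⁻¹ * pa⁻¹ * pb⁻¹ * (pb * (pa * pa)) := by rw [m4e]
  _ = pb⁻¹ * pa := by group
lemma tib2 : pb⁻¹ * stf 2 = hfe 0 0 0 * stf 0 := by
  simp only [stf, hfe, zpow_zero, one_mul, mul_one]
  group
lemma tib3 : pb⁻¹ * stf 3 = hfe (-1) (-1) (-1) * stf 1 := by
  show pb⁻¹ * (pa * pb) = hfe (-1) (-1) (-1) * pa
  symm
  simp only [hfe, zpow_neg, zpow_one, unf, pow_two]
  calc ((pa * pb) * (pa * pb))⁻¹ * (pa * pa)⁻¹ * (pb * pb)⁻¹ * pa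
      = pb⁻¹ * pa⁻¹ * pb⁻¹ * (pa⁻¹ * pa⁻¹ * pa⁻¹) * ((pb * pb)⁻¹ * pa) := by group
  _ = pb⁻¹ * pa⁻¹ * pb⁻¹ * (pa⁻¹ * pa⁻¹ * pa⁻¹) * (pa * (pb * pb)) := by rw [m2e]
  _ = pb⁻¹ * pa⁻¹ * (pb⁻¹ * (pa * pa)⁻¹) * (pb * pb) := by group
  _ = pb⁻¹ * pa⁻¹ * (pa * pa * pb⁻¹) * (pb * pb) := by rw [m7se]
  _ = pb⁻¹ * (pa * pb) := by group

/-! Closure of normal forms under left multiplication by generators -/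

lemma nf_mul {g : PromislowGroup} (x : PromislowGroup)
    (hmove : ∀ i j k : ℤ, ∃ i' j' k' : ℤ, x * hfe i j k = hfe i' j' k' * x)
    (htab : ∀ s : Fin 4, ∃ (d1 d2 d3 : ℤ) (s' : Fin 4), x * stf s = hfe d1 d2 d3 * stf s')
    (h : IsNF g) : IsNF (x * g) := by
  obtain ⟨i, j, k, s, rfl⟩ := h
  obtain ⟨i', j', k', hm⟩ := hmove i j k
  obtain ⟨d1, d2, d3, s', ht⟩ := htab s
  refine ⟨i' + d1, j' + d2, k' + d3, s', ?_⟩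
  rw [← mul_assoc, hm, mul_assoc, ht, ← mul_assoc, hfe_mul]

lemma nf_pa {g : PromislowGroup} (h : IsNF g) : IsNF (pa * g) := by
  refine nf_mul pa (fun i j k => ⟨-i, j, -k, a_hfe i j k⟩) (fun s => ?_) h
  fin_cases s
  · exact ⟨0, 0, 0, 1, ta0⟩
  · exact ⟨0, 1, 0, 0, ta1⟩
  · exact ⟨0, 0, 0, 3, ta2⟩
  · exact ⟨0, 1, 0, 2, ta3⟩

lemma nf_pai {g : PromislowGroup} (h : IsNF g) : IsNF (pa⁻¹ * g) := by
  refine nf_mul pa⁻¹ (fun i j k => ⟨-i, j, -k, ai_hfe i j k⟩) (fun s => ?_) h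
  fin_cases s
  · exact ⟨0, -1, 0, 1, tia0⟩
  · exact ⟨0, 0, 0, 0, tia1⟩
  · exact ⟨0, -1, 0, 3, tia2⟩
  · exact ⟨0, 0, 0, 2, tia3⟩

lemma nf_pb {g : PromislowGroup} (h : IsNF g) : IsNF (pb * g) := by
  refine nf_mul pb (fun i j k => ⟨-i, -j, k, b_hfe i j k⟩) (fun s => ?_) h
  fin_cases s
  · exact ⟨0, 0, 0, 2, tb0⟩
  · exact ⟨-1, -1, 1, 3, tb1⟩
  · exact ⟨0, 0, 1, 0, tb2⟩
  · exact ⟨-1, -1, 0, 1, tb3⟩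

lemma nf_pbi {g : PromislowGroup} (h : IsNF g) : IsNF (pb⁻¹ * g) := by
  refine nf_mul pb⁻¹ (fun i j k => ⟨-i, -j, k, bi_hfe i j k⟩) (fun s => ?_) h
  fin_cases s
  · exact ⟨0, 0, -1, 2, tib0⟩
  · exact ⟨-1, -1, 0, 3, tib1⟩
  · exact ⟨0, 0, 0, 0, tib2⟩
  · exact ⟨-1, -1, -1, 1, tib3⟩

lemma all_nf (g : PromislowGroup) : IsNF g := by
  have hg : g ∈ Subgroup.closure
      (Set.range (PresentedGroup.of : Fin 2 → PromislowGroup)) := by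
    rw [PresentedGroup.closure_range_of]
    exact Subgroup.mem_top g
  induction hg using Subgroup.closure_induction_left with
  | one => exact ⟨0, 0, 0, 0, by simp only [hfe, stf, zpow_zero, one_mul, mul_one]⟩
  | mul_left x hx y hy ih =>
    obtain ⟨n, rfl⟩ := hx
    fin_cases n
    · exact nf_pa ih
    · exact nf_pb ih
  | inv_mul_cancel x hx y hy ih =>
    obtain ⟨n, rfl⟩ := hx
    fin_cases n
    · exact nf_pai ih
    · exact nf_pbi ih

end Promislow
namespace Promislow

/-! ### The representation in `KK` -/

def Ka : KK := ⟨![1, 0, 0], ![1, -1, -1]⟩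
def Kb : KK := ⟨![0, 1, 1], ![-1, 1, -1]⟩

def fgen : Fin 2 → KK := ![Ka, Kb]

lemma krel1 : Kb⁻¹ * Ka ^ 2 * Kb * Ka ^ 2 = 1 := by
  ext i <;> fin_cases i <;> decide

lemma krel2 : Ka⁻¹ * Kb ^ 2 * Ka * Kb ^ 2 = 1 := by
  ext i <;> fin_cases i <;> decide

lemma hrels : ∀ r ∈ promislowRels, FreeGroup.lift fgen r = 1 := by
  intro r hr
  simp only [promislowRels, Set.mem_insert_iff, Set.mem_singleton_iff] at hr
  rcases hr with rfl | rfl <;>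
    simp only [map_mul, map_inv, map_pow, FreeGroup.lift_apply_of, fgen,
      Matrix.cons_val_zero, Matrix.cons_val_one, Matrix.head_cons]
  · exact krel1
  · exact krel2

def piK : PromislowGroup →* KK := PresentedGroup.toGroup hrels

lemma pi_pa : piK pa = Ka := by
  show PresentedGroup.toGroup hrels (PresentedGroup.of 0) = Ka
  rw [PresentedGroup.toGroup.of]
  rfl

lemma pi_pb : piK pb = Kb := by
  show PresentedGroup.toGroup hrels (PresentedGroup.of 1) = Kb
  rw [PresentedGroup.toGroup.of]
  rfl

lemma pi_z : piK pz = ⟨![0, 0, -2], 1⟩ := by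
  rw [pz, map_pow, map_mul, pi_pa, pi_pb]
  ext i <;> fin_cases i <;> decide

lemma pi_a2 : piK (pa ^ 2) = ⟨![2, 0, 0], 1⟩ := by
  rw [map_pow, pi_pa]
  ext i <;> fin_cases i <;> decide

lemma pi_b2 : piK (pb ^ 2) = ⟨![0, 2, 0], 1⟩ := by
  rw [map_pow, pi_pb]
  ext i <;> fin_cases i <;> decide

lemma pi_hfe (i j k : ℤ) : piK (hfe i j k) = ⟨![2 * j, 2 * k, -2 * i], 1⟩ := by
  simp only [hfe, map_mul, map_zpow, pi_z, pi_a2, pi_b2, KK.tr_zpow, KK.tr_mul]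
  ext l
  · fin_cases l <;> simp <;> ring
  · rfl

lemma st_cases : ∀ s : Fin 4, s = 0 ∨ s = 1 ∨ s = 2 ∨ s = 3 := by decide

lemma pi_ker {g : PromislowGroup} (hg : piK g = 1) : g = 1 := by
  obtain ⟨i, j, k, s, rfl⟩ := all_nf g
  rw [map_mul, pi_hfe] at hg
  rcases st_cases s with rfl | rfl | rfl | rfl
  · rw [show stf 0 = 1 from rfl, map_one, mul_one] at hg
    have h0 := congrArg (fun x => KK.v x 0) hg
    have h1 := congrArg (fun x => KK.v x 1) hg
    have h2 := congrArg (fun x => KK.v x 2) hg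
    simp only [Matrix.cons_val_zero, Matrix.cons_val_one, Matrix.head_cons,
      Matrix.cons_val_two, Matrix.tail_cons, KK.one_v] at h0 h1 h2
    obtain rfl : j = 0 := by omega
    obtain rfl : k = 0 := by omega
    obtain rfl : i = 0 := by omega
    simp only [hfe, zpow_zero, one_mul, mul_one]
    rfl
  · rw [show stf 1 = pa from rfl, pi_pa] at hg
    have h := congrArg (fun x => KK.s x 1) hg
    simp only [KK.mul_s, KK.one_s, Ka] at h
    exact absurd h (by decide)
  · rw [show stf 2 = pb from rfl, pi_pb] at hg
    have h := congrArg (fun x => KK.s x 0) hg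
    simp only [KK.mul_s, KK.one_s, Kb] at h
    exact absurd h (by decide)
  · rw [show stf 3 = pa * pb from rfl, map_mul, pi_pa, pi_pb] at hg
    have h := congrArg (fun x => KK.s x 0) hg
    simp only [KK.mul_s, KK.one_s, Ka, Kb] at h
    exact absurd h (by decide)

/-! ### The endomorphism of `KK` -/

def sigK (t w : ℤ) : KK →* KK where
  toFun x := ⟨![x.v 0, x.v 1,
      (1 - 2 * t) * x.v 2 + (if x.s 2 = 1 then 0 else 2 * t - 2 * w)], x.s⟩
  map_one' := by
    ext i
    · fin_cases i <;> simp
    · rfl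
  map_mul' x y := by
    ext i
    · fin_cases i
      · simp
      · simp
      · rcases Int.units_eq_one_or (x.s 2) with hx | hx <;>
          rcases Int.units_eq_one_or (y.s 2) with hy | hy <;>
            simp [hx, hy] <;> ring
    · rfl

lemma sigK_ker (t w : ℤ) {x : KK} (h : sigK t w x = 1) : x = 1 := by
  have hs := congrArg KK.s h
  have hs2 : x.s 2 = 1 := by
    have := congrArg (fun f => f 2) hs
    exact this
  have h0 := congrArg (fun y => KK.v y 0) h
  have h1 := congrArg (fun y => KK.v y 1) h
  have h2 := congrArg (fun y => KK.v y 2) h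
  simp only [sigK, MonoidHom.coe_mk, OneHom.coe_mk, Matrix.cons_val_zero,
    Matrix.cons_val_one, Matrix.head_cons, Matrix.cons_val_two, Matrix.tail_cons,
    KK.one_v, hs2, if_pos] at h0 h1 h2
  have h2t : (1 : ℤ) - 2 * t ≠ 0 := by omega
  have hv2 : x.v 2 = 0 := by
    rcases mul_eq_zero.mp (by linarith : (1 - 2 * t) * x.v 2 = 0) with h' | h'
    · exact absurd h' h2t
    · exact h'
  ext i
  · fin_cases i
    · exact h0
    · exact h1
    · exact hv2
  · have := congrArg (fun f => f i) hs
    exact congrArg Units.val this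

end Promislow

open Promislow in
/-- For integers `t, w`, any endomorphism `σ` of the Promislow group with
`σ(a) = z^{w-t}a` and `σ(b) = z^w b` sends `z ↦ z^{1-2t}`, fixes `a²` and `b²`, and
is injective. -/
theorem sigma_injective (t w : ℤ) (σ : PromislowGroup →* PromislowGroup)
    (ha : σ pa = pz ^ (w - t) * pa) (hb : σ pb = pz ^ w * pb) :
    σ pz = pz ^ (1 - 2 * t) ∧ σ (pa ^ 2) = pa ^ 2 ∧ σ (pb ^ 2) = pb ^ 2 ∧
      Function.Injective σ := by
  have az : ∀ n : ℤ, pa * pz ^ n = pz ^ (-n) * pa := move_inv scZa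
  have bz : ∀ n : ℤ, pb * pz ^ n = pz ^ (-n) * pb := move_inv scZb
  have pz_def : (pa * pb) ^ 2 = pz := rfl
  refine ⟨?_, ?_, ?_, ?_⟩
  · rw [pz, map_pow, map_mul, ha, hb]
    calc (pz ^ (w - t) * pa * (pz ^ w * pb)) ^ 2
        = pz ^ (w - t) * (pa * pz ^ w) * pb * (pz ^ (w - t) * (pa * pz ^ w) * pb) := by
          rw [pow_two]; group
    _ = pz ^ (w - t) * (pz ^ (-w) * pa) * pb * (pz ^ (w - t) * (pz ^ (-w) * pa) * pb) := by
          rw [az]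
    _ = pz ^ (-t) * pa * (pb * pz ^ (-t)) * (pa * pb) := by group
    _ = pz ^ (-t) * pa * (pz ^ (-(-t)) * pb) * (pa * pb) := by rw [bz]
    _ = pz ^ (-t) * (pa * pz ^ t) * (pb * (pa * pb)) := by group
    _ = pz ^ (-t) * (pz ^ (-t) * pa) * (pb * (pa * pb)) := by rw [az]
    _ = pz ^ (-t) * pz ^ (-t) * (pa * pb * (pa * pb)) := by group
    _ = pz ^ (-t) * pz ^ (-t) * (pa * pb) ^ 2 := by rw [pow_two (pa * pb)]
    _ = pz ^ (-t) * pz ^ (-t) * pz := by rw [pz_def]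
    _ = pz ^ (1 - 2 * t) := by group
  · rw [map_pow, ha]
    calc (pz ^ (w - t) * pa) ^ 2
        = pz ^ (w - t) * (pa * pz ^ (w - t)) * pa := by rw [pow_two]; group
    _ = pz ^ (w - t) * (pz ^ (-(w - t)) * pa) * pa := by rw [az]
    _ = pz ^ (w - t) * pz ^ (-(w - t)) * (pa * pa) := by group
    _ = pa * pa := by rw [← zpow_add, add_neg_cancel, zpow_zero, one_mul]
    _ = pa ^ 2 := (pow_two pa).symm
  · rw [map_pow, hb]
    calc (pz ^ w * pb) ^ 2
        = pz ^ w * (pb * pz ^ w) * pb := by rw [pow_two]; group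
    _ = pz ^ w * (pz ^ (-w) * pb) * pb := by rw [bz]
    _ = pz ^ w * pz ^ (-w) * (pb * pb) := by group
    _ = pb * pb := by rw [← zpow_add, add_neg_cancel, zpow_zero, one_mul]
    _ = pb ^ 2 := (pow_two pb).symm
  · have hcomm : piK.comp σ = (sigK t w).comp piK := by
      apply PresentedGroup.ext
      intro x
      fin_cases x
      · show piK (σ pa) = sigK t w (piK pa)
        rw [ha, map_mul, map_zpow, pi_z, pi_pa, KK.tr_zpow]
        ext i
        · fin_cases i <;>
            simp [sigK, Ka, Matrix.cons_val_zero, Matrix.cons_val_one, Matrix.head_cons] <;>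
            ring
        · simp [sigK]
      · show piK (σ pb) = sigK t w (piK pb)
        rw [hb, map_mul, map_zpow, pi_z, pi_pb, KK.tr_zpow]
        ext i
        · fin_cases i <;>
            simp [sigK, Kb, Matrix.cons_val_zero, Matrix.cons_val_one, Matrix.head_cons] <;>
            ring
        · simp [sigK]
    rw [injective_iff_map_eq_one]
    intro g hg
    have h1 : sigK t w (piK g) = 1 := by
      have h2 := DFunLike.congr_fun hcomm g
      simp only [MonoidHom.comp_apply] at h2
      rw [← h2, hg, map_one]
    exact pi_ker (sigK_ker t w h1)
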